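/- arXiv:1101.2374 — 3 statements merged into one kernel-verified Lean document; each statement's English description precedes it below -/
import Mathlib

section
/- Let U be a p×d real matrix and V a p×(p−d) real matrix (d ≤ p) such that W = [U, V] satisfies WᵗW = WWᵗ = I_p, let Σ be a symmetric positive definite d×d real matrix, β > 0, let Δ be the p×p block-diagonal matrix with blocks Σ and β·I_{p−d}, set S = W Δ Wᵗ, and let π > 0. Define the Gaussian density φ(y; m, S) = (2π_c)^{−p/2} det(S)^{−1/2} exp(−½ (y−m)ᵗ S⁻¹ (y−m)) where π_c denotes the circle constant. Then for every y, m ∈ ℝᵖ: −2·log(π · φ(y; m, S)) = (P(y−m))ᵗ (U Σ⁻¹ Uᵗ) (P(y−m)) + (1/β)·‖(y−m) − P(y−m)‖² + log(det Σ) + (p−d)·log β − 2·log π + p·log(2π_c), where P(x) = U Uᵗ x and ‖·‖ is the Euclidean norm on ℝᵖ. -/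
open Matrix

/-- The multivariate Gaussian density
`φ(y; m, S) = (2π)^(-p/2) det(S)^(-1/2) exp(-½ (y-m)ᵗ S⁻¹ (y-m))`. -/
noncomputable def gaussianDensity {p : ℕ} (S : Matrix (Fin p) (Fin p) ℝ)
    (m y : Fin p → ℝ) : ℝ :=
  (2 * Real.pi) ^ (-(p : ℝ) / 2) * S.det ^ (-(1 : ℝ) / 2) *
    Real.exp (-(1 / 2) * ((y - m) ⬝ᵥ S⁻¹.mulVec (y - m)))

lemma dot_mulVec_left {n : Type*} [Fintype n] (A : Matrix n n ℝ) (x w : n → ℝ) :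
    A.mulVec x ⬝ᵥ w = x ⬝ᵥ Aᵀ.mulVec w := by
  rw [dotProduct_comm, Matrix.dotProduct_mulVec, ← Matrix.mulVec_transpose, dotProduct_comm]

/-- Proposition 1 of the paper (E step of Fisher-EM, model DLM_[Σ_kβ_k]): the cost
function `Γ_k(y) = -2 log (π_k φ(y; m, S))` decomposes via the projection
`P(x) = U Uᵗ x` onto the latent discriminative subspace. -/
theorem stmt_5 (p d : ℕ) (hd : d ≤ p)
    (U : Matrix (Fin p) (Fin d) ℝ) (V : Matrix (Fin p) (Fin (p - d)) ℝ)
    (hW1 : (Matrix.fromCols U V)ᵀ * Matrix.fromCols U V = 1)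
    (hW2 : Matrix.fromCols U V * (Matrix.fromCols U V)ᵀ = 1)
    (Sig : Matrix (Fin d) (Fin d) ℝ) (hSig : Sig.PosDef)
    (β : ℝ) (hβ : 0 < β)
    (S : Matrix (Fin p) (Fin p) ℝ)
    (hS : S = Matrix.fromCols U V *
        Matrix.fromBlocks Sig 0 0 (β • (1 : Matrix (Fin (p - d)) (Fin (p - d)) ℝ)) *
        (Matrix.fromCols U V)ᵀ)
    (πk : ℝ) (hπk : 0 < πk) (y m : Fin p → ℝ) :
    -2 * Real.log (πk * gaussianDensity S m y) =
      ((U * Uᵀ).mulVec (y - m)) ⬝ᵥ ((U * Sig⁻¹ * Uᵀ).mulVec ((U * Uᵀ).mulVec (y - m)))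
        + (1 / β) * (((y - m) - (U * Uᵀ).mulVec (y - m)) ⬝ᵥ ((y - m) - (U * Uᵀ).mulVec (y - m)))
        + Real.log Sig.det + ((p : ℝ) - (d : ℝ)) * Real.log β
        - 2 * Real.log πk + (p : ℝ) * Real.log (2 * Real.pi) := by
  set x := y - m with hx
  set W := Matrix.fromCols U V with hWdef
  set Δ := Matrix.fromBlocks Sig 0 0 (β • (1 : Matrix (Fin (p - d)) (Fin (p - d)) ℝ)) with hΔdef
  -- block identities from hW1
  have hblk := hW1
  rw [Matrix.transpose_fromCols, Matrix.fromRows_mul_fromCols,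
    ← Matrix.fromBlocks_one] at hblk
  obtain ⟨hUU, hUV, hVU, hVV⟩ := Matrix.fromBlocks_inj.mp hblk
  have hsum : U * Uᵀ + V * Vᵀ = 1 := by
    have h := hW2
    rwa [hWdef, Matrix.transpose_fromCols, Matrix.fromCols_mul_fromRows] at h
  -- alternate form of S
  have hSalt : S = U * Sig * Uᵀ + β • (V * Vᵀ) := by
    rw [hS, Matrix.transpose_fromCols, Matrix.fromCols_mul_fromBlocks,
      Matrix.fromCols_mul_fromRows]
    simp [Matrix.mul_smul, Matrix.smul_mul, Matrix.mul_assoc]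
  -- determinant
  have e : Fin d ⊕ Fin (p - d) ≃ Fin p :=
    finSumFinEquiv.trans (finCongr (Nat.add_sub_cancel' hd))
  have hdetS : S.det = Sig.det * β ^ (p - d) := by
    have hW' : W * Δ * Wᵀ =
        (W.submatrix id e.symm) * (Δ.submatrix e.symm e.symm) * ((Wᵀ).submatrix e.symm id) := by
      rw [Matrix.submatrix_mul_equiv, Matrix.submatrix_mul_equiv]
      rfl
    have hWW' : (W.submatrix id e.symm) * ((Wᵀ).submatrix e.symm id) = 1 := by
      rw [Matrix.submatrix_mul_equiv]
      exact hW2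
    have hdetWW' : (W.submatrix id e.symm).det * ((Wᵀ).submatrix e.symm id).det = 1 := by
      rw [← Matrix.det_mul, hWW', Matrix.det_one]
    have hΔdet : (Δ.submatrix e.symm e.symm).det = Sig.det * β ^ (p - d) := by
      rw [Matrix.det_submatrix_equiv_self, hΔdef, Matrix.det_fromBlocks_zero₂₁,
        Matrix.smul_eq_diagonal_mul]
      simp [Matrix.det_diagonal]
    rw [hS, hW', Matrix.det_mul, Matrix.det_mul, mul_comm _ ((Wᵀ).submatrix e.symm id).det,
      ← mul_assoc, mul_comm ((Wᵀ).submatrix e.symm id).det, hdetWW', one_mul, hΔdet]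
  have hdetSig : 0 < Sig.det := hSig.det_pos
  have hdetSpos : 0 < S.det := by rw [hdetS]; positivity
  -- inverse
  have hSigInv : Sig * Sig⁻¹ = 1 := Matrix.mul_nonsing_inv _ (isUnit_iff_ne_zero.mpr hdetSig.ne')
  have hSinv : S⁻¹ = U * Sig⁻¹ * Uᵀ + β⁻¹ • (V * Vᵀ) := by
    apply Matrix.inv_eq_right_inv
    rw [hSalt]
    have expand : (U * Sig * Uᵀ + β • (V * Vᵀ)) * (U * Sig⁻¹ * Uᵀ + β⁻¹ • (V * Vᵀ)) =
        U * Sig * (Uᵀ * U) * Sig⁻¹ * Uᵀ + β⁻¹ • (U * Sig * (Uᵀ * V) * Vᵀ)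
          + β • (V * (Vᵀ * U) * Sig⁻¹ * Uᵀ) + (β * β⁻¹) • (V * (Vᵀ * V) * Vᵀ) := by
      simp only [Matrix.add_mul, Matrix.mul_add, Matrix.smul_mul, Matrix.mul_smul,
        smul_smul, Matrix.mul_assoc]
      module
    rw [expand, hUU, hUV, hVU, hVV, mul_inv_cancel₀ hβ.ne']
    simp only [Matrix.mul_one, Matrix.mul_zero, Matrix.zero_mul, smul_zero, add_zero, zero_add,
      one_smul]
    rw [Matrix.mul_assoc U Sig, hSigInv, Matrix.mul_one]
    exact hsum
  -- quadratic form
  have hQ : x ⬝ᵥ S⁻¹.mulVec x =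
      x ⬝ᵥ (U * Sig⁻¹ * Uᵀ).mulVec x + β⁻¹ * (x ⬝ᵥ (V * Vᵀ).mulVec x) := by
    rw [hSinv, Matrix.add_mulVec, dotProduct_add, Matrix.smul_mulVec, dotProduct_smul,
      smul_eq_mul]
  -- first term
  have hUUZ : ∀ {k : ℕ} (Z : Matrix (Fin d) (Fin k) ℝ), Uᵀ * (U * Z) = Z := fun Z => by
    rw [← Matrix.mul_assoc, hUU, Matrix.one_mul]
  have hVVZ : ∀ {k : ℕ} (Z : Matrix (Fin (p - d)) (Fin k) ℝ), Vᵀ * (V * Z) = Z := fun Z => by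
    rw [← Matrix.mul_assoc, hVV, Matrix.one_mul]
  have hM : (U * Uᵀ)ᵀ * (U * Sig⁻¹ * Uᵀ * (U * Uᵀ)) = U * Sig⁻¹ * Uᵀ := by
    simp only [Matrix.transpose_mul, Matrix.transpose_transpose, Matrix.mul_assoc, hUUZ]
  have hN : (V * Vᵀ)ᵀ * (V * Vᵀ) = V * Vᵀ := by
    simp only [Matrix.transpose_mul, Matrix.transpose_transpose, Matrix.mul_assoc, hVVZ]
  have hterm1 : ((U * Uᵀ).mulVec x) ⬝ᵥ ((U * Sig⁻¹ * Uᵀ).mulVec ((U * Uᵀ).mulVec x)) =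
      x ⬝ᵥ (U * Sig⁻¹ * Uᵀ).mulVec x := by
    rw [Matrix.mulVec_mulVec, dot_mulVec_left, Matrix.mulVec_mulVec, hM]
  -- second term
  have hproj : x - (U * Uᵀ).mulVec x = (V * Vᵀ).mulVec x := by
    have : (V * Vᵀ) = 1 - U * Uᵀ := by rw [← hsum]; abel
    rw [this, Matrix.sub_mulVec, Matrix.one_mulVec]
  have hterm2 : (x - (U * Uᵀ).mulVec x) ⬝ᵥ (x - (U * Uᵀ).mulVec x) =
      x ⬝ᵥ (V * Vᵀ).mulVec x := by
    rw [hproj, dot_mulVec_left, Matrix.mulVec_mulVec, hN]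
  -- log computation
  have hlog2π : (0:ℝ) < 2 * Real.pi := by positivity
  have hlogS : Real.log S.det = Real.log Sig.det + ((p:ℝ) - (d:ℝ)) * Real.log β := by
    rw [hdetS, Real.log_mul hdetSig.ne' (by positivity), Real.log_pow]
    rw [Nat.cast_sub hd]
  have hgd : Real.log (πk * gaussianDensity S m y) =
      Real.log πk + (-(p:ℝ)/2) * Real.log (2 * Real.pi)
        + (-(1:ℝ)/2) * Real.log S.det + (-(1/2) * (x ⬝ᵥ S⁻¹.mulVec x)) := by
    have ha : (0:ℝ) < (2 * Real.pi) ^ (-(p:ℝ)/2) := Real.rpow_pos_of_pos hlog2π _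
    have hb : (0:ℝ) < S.det ^ (-(1:ℝ)/2) := Real.rpow_pos_of_pos hdetSpos _
    rw [gaussianDensity, ← hx]
    rw [Real.log_mul hπk.ne' (mul_pos (mul_pos ha hb) (Real.exp_pos _)).ne',
      Real.log_mul (mul_pos ha hb).ne' (Real.exp_ne_zero _),
      Real.log_mul ha.ne' hb.ne', Real.log_rpow hlog2π, Real.log_rpow hdetSpos,
      Real.log_exp]
    ring
  rw [hgd, hQ, hlogS, ← hterm1, ← hterm2]
  ring
end

section
/- Let y_1, …, y_n ∈ ℝᵖ and for i = 1,…,n, k = 1,…,K let t_ik ≥ 0. For each k, suppose: U is a p×d matrix and V a p×(p−d) matrix such that W = [U,V] satisfies WᵗW = WWᵗ = I_p; Σ_k is a symmetric positive definite d×d matrix and β_k > 0; Δ_k is the block-diagonal matrix with blocks Σ_k and β_k I_{p−d}; S_k = W Δ_k Wᵗ; π_k > 0; m_k = (1/n_k) ∑_i t_ik y_i where n_k = ∑_i t_ik > 0; and C_k = (1/n_k) ∑_i t_ik (y_i − m_k)(y_i − m_k)ᵗ. Define φ(y; m, S) = (2π_c)^{−p/2} det(S)^{−1/2} exp(−½(y−m)ᵗS⁻¹(y−m)).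 Then ∑_{i=1}^n ∑_{k=1}^K t_ik · log(π_k φ(y_i; m_k, S_k)) = −½ ∑_{k=1}^K n_k [ −2 log(π_k) + trace(Σ_k⁻¹ Uᵗ C_k U) + log(det Σ_k) + (p−d) log(β_k) + (1/β_k)(trace(C_k) − ∑_{j=1}^d u_jᵗ C_k u_j) + p·log(2π_c) ], where u_j is the j-th column of U and π_c the circle constant. -/
open Matrix

lemma quad_trace' {p : ℕ} (A : Matrix (Fin p) (Fin p) ℝ) (x : Fin p → ℝ) :
    x ⬝ᵥ A.mulVec x = (A * vecMulVec x x).trace := by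
  simp only [Matrix.trace, Matrix.diag, mul_apply, vecMulVec_apply, dotProduct, Matrix.mulVec,
    Finset.mul_sum]
  apply Finset.sum_congr rfl
  intro i _
  apply Finset.sum_congr rfl
  intro j _
  ring

lemma trace_fromBlocks' {a b : ℕ} (A : Matrix (Fin a) (Fin a) ℝ) (B : Matrix (Fin a) (Fin b) ℝ)
    (C : Matrix (Fin b) (Fin a) ℝ) (D : Matrix (Fin b) (Fin b) ℝ) :
    (fromBlocks A B C D).trace = A.trace + D.trace := by
  simp [Matrix.trace, Matrix.diag, Fintype.sum_sum_type, fromBlocks]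

lemma traceU' {p d : ℕ} (U : Matrix (Fin p) (Fin d) ℝ) (C : Matrix (Fin p) (Fin p) ℝ) :
    (Uᵀ * C * U).trace = ∑ j : Fin d, (fun i => U i j) ⬝ᵥ C.mulVec (fun i => U i j) := by
  simp only [Matrix.trace, Matrix.diag, mul_apply, transpose_apply, dotProduct, Matrix.mulVec,
    Finset.sum_mul, Finset.mul_sum]
  apply Finset.sum_congr rfl
  intro j _
  rw [Finset.sum_comm]
  apply Finset.sum_congr rfl
  intro i _
  apply Finset.sum_congr rfl
  intro i' _
  ring

/-- Proposition 2 of the paper: closed form of the conditional expectation of the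
complete log-likelihood for the model DLM_[Σ_kβ_k]. -/
theorem stmt_8 (p d n K : ℕ) (hd : d ≤ p)
    (y : Fin n → Fin p → ℝ) (t : Fin n → Fin K → ℝ) (ht : ∀ i k, 0 ≤ t i k)
    (U : Matrix (Fin p) (Fin d) ℝ) (V : Matrix (Fin p) (Fin (p - d)) ℝ)
    (hW1 : (Matrix.fromCols U V)ᵀ * Matrix.fromCols U V = 1)
    (hW2 : Matrix.fromCols U V * (Matrix.fromCols U V)ᵀ = 1)
    (Sig : Fin K → Matrix (Fin d) (Fin d) ℝ) (hSig : ∀ k, (Sig k).PosDef)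
    (β : Fin K → ℝ) (hβ : ∀ k, 0 < β k)
    (S : Fin K → Matrix (Fin p) (Fin p) ℝ)
    (hS : ∀ k, S k = Matrix.fromCols U V *
        Matrix.fromBlocks (Sig k) 0 0 (β k • (1 : Matrix (Fin (p - d)) (Fin (p - d)) ℝ)) *
        (Matrix.fromCols U V)ᵀ)
    (πk : Fin K → ℝ) (hπ : ∀ k, 0 < πk k)
    (nk : Fin K → ℝ) (hnk : ∀ k, nk k = ∑ i, t i k) (hnkpos : ∀ k, 0 < nk k)
    (m : Fin K → Fin p → ℝ) (hm : ∀ k, m k = (nk k)⁻¹ • ∑ i, t i k • y i)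
    (C : Fin K → Matrix (Fin p) (Fin p) ℝ)
    (hC : ∀ k, C k = (nk k)⁻¹ • ∑ i, t i k • Matrix.vecMulVec (y i - m k) (y i - m k)) :
    ∑ i, ∑ k, t i k * Real.log (πk k * gaussianDensity (S k) (m k) (y i))
      = -(1 / 2) * ∑ k, nk k *
          (-2 * Real.log (πk k)
            + ((Sig k)⁻¹ * Uᵀ * C k * U).trace
            + Real.log (Sig k).det
            + ((p : ℝ) - (d : ℝ)) * Real.log (β k)
            + (1 / β k) * ((C k).trace
                - ∑ j : Fin d, (fun i => U i j) ⬝ᵥ (C k).mulVec (fun i => U i j))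
            + (p : ℝ) * Real.log (2 * Real.pi)) := by
  set W := Matrix.fromCols U V with hWdef
  have hcast : ((p - d : ℕ) : ℝ) = (p : ℝ) - (d : ℝ) := by
    rw [Nat.cast_sub hd]
  have hdetSig : ∀ k, 0 < (Sig k).det := fun k => (hSig k).det_pos
  have hβne : ∀ k, (β k) ≠ 0 := fun k => (hβ k).ne'
  -- block diagonal inverse
  have hDinv : ∀ k, (Matrix.fromBlocks (Sig k) 0 0
        (β k • (1 : Matrix (Fin (p - d)) (Fin (p - d)) ℝ))) *
      (Matrix.fromBlocks (Sig k)⁻¹ 0 0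
        ((β k)⁻¹ • (1 : Matrix (Fin (p - d)) (Fin (p - d)) ℝ))) = 1 := by
    intro k
    rw [Matrix.fromBlocks_multiply]
    simp [Matrix.mul_nonsing_inv _ (isUnit_iff_ne_zero.mpr (hdetSig k).ne'),
      smul_smul, mul_inv_cancel₀ (hβne k), inv_mul_cancel₀ (hβne k), one_smul, Matrix.fromBlocks_one]
  have e : (Fin d ⊕ Fin (p - d)) ≃ Fin p :=
    finSumFinEquiv.trans (finCongr (Nat.add_sub_cancel' hd))
  have hdetS : ∀ k, (S k).det = (Sig k).det * β k ^ (p - d) := by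
    intro k
    have hmul : S k = W.submatrix id ⇑e.symm *
        (Matrix.fromBlocks (Sig k) 0 0
          (β k • (1 : Matrix (Fin (p - d)) (Fin (p - d)) ℝ))).submatrix ⇑e.symm ⇑e.symm *
        (W.submatrix id ⇑e.symm)ᵀ := by
      rw [Matrix.transpose_submatrix, Matrix.submatrix_mul_equiv,
        Matrix.submatrix_mul_equiv, Matrix.submatrix_id_id, hS k]
    have hW1' : (W.submatrix id ⇑e.symm)ᵀ * W.submatrix id ⇑e.symm = 1 := by
      rw [Matrix.transpose_submatrix]
      have h := Matrix.submatrix_mul_equiv Wᵀ W (⇑e.symm) (Equiv.refl (Fin p)) (⇑e.symm)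
      simp only [Equiv.coe_refl] at h
      rw [h, hW1, Matrix.submatrix_one_equiv]
    have hWW : (W.submatrix id ⇑e.symm).det * (W.submatrix id ⇑e.symm).det = (1 : ℝ) := by
      have h := congrArg Matrix.det hW1'
      rwa [Matrix.det_mul, Matrix.det_transpose, Matrix.det_one] at h
    rw [hmul, Matrix.det_mul, Matrix.det_mul, Matrix.det_transpose,
      Matrix.det_submatrix_equiv_self, Matrix.det_fromBlocks_zero₂₁, Matrix.det_smul,
      Matrix.det_one]
    simp only [Fintype.card_fin]
    linear_combination ((Sig k).det * β k ^ (p - d)) * hWW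
  have hdetSpos : ∀ k, 0 < (S k).det := by
    intro k
    rw [hdetS k]
    exact mul_pos (hdetSig k) (pow_pos (hβ k) _)
  have hSinv : ∀ k, (S k)⁻¹ = W * (Matrix.fromBlocks (Sig k)⁻¹ 0 0
      ((β k)⁻¹ • (1 : Matrix (Fin (p - d)) (Fin (p - d)) ℝ))) * Wᵀ := by
    intro k
    apply Matrix.inv_eq_right_inv
    rw [hS k]
    simp only [Matrix.mul_assoc]
    rw [← Matrix.mul_assoc Wᵀ W, hW1, Matrix.one_mul,
      ← Matrix.mul_assoc (Matrix.fromBlocks (Sig k) 0 0 _), hDinv k, Matrix.one_mul, hW2]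
  -- weighted sum of quadratic forms
  have hsum : ∀ k, ∑ i, t i k * ((y i - m k) ⬝ᵥ (S k)⁻¹.mulVec (y i - m k))
      = nk k * ((S k)⁻¹ * C k).trace := by
    intro k
    have h2 : ((S k)⁻¹ * (nk k • C k)).trace = nk k * ((S k)⁻¹ * C k).trace := by
      rw [Matrix.mul_smul, Matrix.trace_smul, smul_eq_mul]
    rw [← h2, hC k, smul_smul, mul_inv_cancel₀ (hnkpos k).ne', one_smul,
      Matrix.mul_sum, Matrix.trace_sum]
    apply Finset.sum_congr rfl
    intro i _
    rw [quad_trace', Matrix.mul_smul, Matrix.trace_smul, smul_eq_mul]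
  -- trace identity
  have htr : ∀ k, ((S k)⁻¹ * C k).trace
      = ((Sig k)⁻¹ * Uᵀ * C k * U).trace
        + (1 / β k) * ((C k).trace
            - ∑ j : Fin d, (fun i => U i j) ⬝ᵥ (C k).mulVec (fun i => U i j)) := by
    intro k
    have hblock : Wᵀ * C k * W = Matrix.fromBlocks (Uᵀ * C k * U) (Uᵀ * C k * V)
        (Vᵀ * C k * U) (Vᵀ * C k * V) := by
      rw [hWdef, Matrix.transpose_fromCols, Matrix.fromRows_mul,
        Matrix.fromRows_mul_fromCols]
    have hassoc : (S k)⁻¹ * C k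
        = W * (Matrix.fromBlocks (Sig k)⁻¹ 0 0
            ((β k)⁻¹ • (1 : Matrix (Fin (p - d)) (Fin (p - d)) ℝ)) * (Wᵀ * C k)) := by
      rw [hSinv k]; simp only [Matrix.mul_assoc]
    rw [hassoc, Matrix.trace_mul_comm]
    have hassoc2 : Matrix.fromBlocks (Sig k)⁻¹ 0 0
          ((β k)⁻¹ • (1 : Matrix (Fin (p - d)) (Fin (p - d)) ℝ)) * (Wᵀ * C k) * W
        = Matrix.fromBlocks (Sig k)⁻¹ 0 0
          ((β k)⁻¹ • (1 : Matrix (Fin (p - d)) (Fin (p - d)) ℝ)) * (Wᵀ * C k * W) := by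
      simp only [Matrix.mul_assoc]
    rw [hassoc2, hblock, Matrix.fromBlocks_multiply]
    simp only [Matrix.zero_mul, Matrix.mul_zero, add_zero, zero_add]
    rw [trace_fromBlocks', smul_mul_assoc, Matrix.one_mul, Matrix.trace_smul, smul_eq_mul]
    have hUU : V * Vᵀ = 1 - U * Uᵀ := by
      have h := hW2
      rw [hWdef, Matrix.transpose_fromCols, Matrix.fromCols_mul_fromRows] at h
      exact eq_sub_of_add_eq' h
    have htrV : (Vᵀ * C k * V).trace = (C k).trace - (Uᵀ * C k * U).trace := by
      rw [Matrix.trace_mul_cycle, hUU, Matrix.sub_mul, Matrix.trace_sub, Matrix.one_mul]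
      congr 1
      exact (Matrix.trace_mul_cycle Uᵀ (C k) U).symm
    rw [htrV, ← traceU' U (C k)]
    simp only [Matrix.mul_assoc, one_div]
  -- per-cluster sum
  have hmain : ∀ k, ∑ i, t i k * Real.log (πk k * gaussianDensity (S k) (m k) (y i))
      = -(1 / 2) * (nk k *
          (-2 * Real.log (πk k)
            + ((Sig k)⁻¹ * Uᵀ * C k * U).trace
            + Real.log (Sig k).det
            + ((p : ℝ) - (d : ℝ)) * Real.log (β k)
            + (1 / β k) * ((C k).trace
                - ∑ j : Fin d, (fun i => U i j) ⬝ᵥ (C k).mulVec (fun i => U i j))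
            + (p : ℝ) * Real.log (2 * Real.pi))) := by
    intro k
    have hlog : ∀ i, Real.log (πk k * gaussianDensity (S k) (m k) (y i))
        = Real.log (πk k) + (-(p : ℝ) / 2) * Real.log (2 * Real.pi)
          + (-(1 : ℝ) / 2) * Real.log (S k).det
          + (-(1 / 2)) * ((y i - m k) ⬝ᵥ (S k)⁻¹.mulVec (y i - m k)) := by
      intro i
      have h2π : (0 : ℝ) < 2 * Real.pi := by positivity
      have hXne : ((2 * Real.pi) ^ (-(p : ℝ) / 2) : ℝ) ≠ 0 :=
        (Real.rpow_pos_of_pos h2π _).ne'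
      have hYne : ((S k).det ^ (-(1 : ℝ) / 2) : ℝ) ≠ 0 :=
        (Real.rpow_pos_of_pos (hdetSpos k) _).ne'
      unfold gaussianDensity
      rw [Real.log_mul (hπ k).ne' (by
          exact mul_ne_zero (mul_ne_zero hXne hYne) (Real.exp_ne_zero _)),
        Real.log_mul (mul_ne_zero hXne hYne) (Real.exp_ne_zero _),
        Real.log_mul hXne hYne,
        Real.log_rpow h2π, Real.log_rpow (hdetSpos k), Real.log_exp]
      ring
    have hlogdet : Real.log (S k).det
        = Real.log (Sig k).det + ((p : ℝ) - (d : ℝ)) * Real.log (β k) := by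
      rw [hdetS k, Real.log_mul (hdetSig k).ne' (pow_ne_zero _ (hβne k)), Real.log_pow, hcast]
    calc ∑ i, t i k * Real.log (πk k * gaussianDensity (S k) (m k) (y i))
        = ∑ i, (t i k * (Real.log (πk k) + (-(p : ℝ) / 2) * Real.log (2 * Real.pi)
            + (-(1 : ℝ) / 2) * Real.log (S k).det)
          + (-(1 / 2)) * (t i k * ((y i - m k) ⬝ᵥ (S k)⁻¹.mulVec (y i - m k)))) := by
          apply Finset.sum_congr rfl; intro i _; rw [hlog i]; ring
      _ = nk k * (Real.log (πk k) + (-(p : ℝ) / 2) * Real.log (2 * Real.pi)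
            + (-(1 : ℝ) / 2) * Real.log (S k).det)
          + (-(1 / 2)) * (nk k * ((S k)⁻¹ * C k).trace) := by
          rw [Finset.sum_add_distrib, ← Finset.sum_mul, ← hnk k, ← Finset.mul_sum, hsum k]
      _ = _ := by rw [hlogdet, htr k]; ring
  rw [Finset.sum_comm, Finset.mul_sum]
  exact Finset.sum_congr rfl fun k _ => hmain k
end

section
/- Let y_1, …, y_n ∈ ℝᵖ, let t_1, …, t_n be nonnegative reals with n_k = ∑_i t_i > 0. Let U be a p×d matrix and V a p×(p−d) matrix such that W = [U,V] satisfies WᵗW = WWᵗ = I_p, let Σ be a symmetric positive definite d×d matrix, β > 0, and set S⁻¹ = U Σ⁻¹ Uᵗ + (1/β) V Vᵗ. Then the function μ ↦ ∑_{i=1}^n t_i (y_i − Uμ)ᵗ S⁻¹ (y_i − Uμ), defined on ℝᵈ, attains its unique minimum at μ̂ = (1/n_k) ∑_{i=1}^n t_i Uᵗ y_i. -/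
open Matrix

private lemma sum_dot {n d : ℕ} (v : Fin n → (Fin d → ℝ)) (c : Fin d → ℝ) :
    ∑ i, v i ⬝ᵥ c = (∑ i, v i) ⬝ᵥ c := by
  simp only [dotProduct, Finset.sum_apply, Finset.sum_mul]
  exact Finset.sum_comm

/-- M step for the latent means (proof of Proposition 3): the weighted quadratic
functional `μ ↦ ∑ i, t i * (y i - Uμ)ᵗ S⁻¹ (y i - Uμ)`, with
`S⁻¹ = U Sig⁻¹ Uᵗ + (1/β) V Vᵗ`, attains its unique minimum at
`μ̂ = (1/n_k) ∑ i, t i • Uᵗ y i`. -/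
theorem stmt_10 (p d n : ℕ) (hd : d ≤ p)
    (y : Fin n → Fin p → ℝ) (t : Fin n → ℝ) (ht : ∀ i, 0 ≤ t i)
    (nk : ℝ) (hnk : nk = ∑ i, t i) (hpos : 0 < nk)
    (U : Matrix (Fin p) (Fin d) ℝ) (V : Matrix (Fin p) (Fin (p - d)) ℝ)
    (hW1 : (Matrix.fromCols U V)ᵀ * Matrix.fromCols U V = 1)
    (hW2 : Matrix.fromCols U V * (Matrix.fromCols U V)ᵀ = 1)
    (Sig : Matrix (Fin d) (Fin d) ℝ) (hSig : Sig.PosDef)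
    (β : ℝ) (hβ : 0 < β)
    (Sinv : Matrix (Fin p) (Fin p) ℝ)
    (hSinv : Sinv = U * Sig⁻¹ * Uᵀ + (1 / β) • (V * Vᵀ))
    (μhat : Fin d → ℝ) (hμhat : μhat = nk⁻¹ • ∑ i, t i • Uᵀ.mulVec (y i)) :
    ∀ μ : Fin d → ℝ,
      ((∑ i, t i * ((y i - U.mulVec μhat) ⬝ᵥ Sinv.mulVec (y i - U.mulVec μhat)))
          ≤ ∑ i, t i * ((y i - U.mulVec μ) ⬝ᵥ Sinv.mulVec (y i - U.mulVec μ))) ∧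
      ((∑ i, t i * ((y i - U.mulVec μ) ⬝ᵥ Sinv.mulVec (y i - U.mulVec μ)))
          = (∑ i, t i * ((y i - U.mulVec μhat) ⬝ᵥ Sinv.mulVec (y i - U.mulVec μhat)))
        → μ = μhat) := by
  -- block identities
  rw [transpose_fromCols, fromRows_mul_fromCols, ← fromBlocks_one] at hW1
  obtain ⟨hUU, -, hVU, -⟩ := fromBlocks_inj.mp hW1
  have hne : nk ≠ 0 := ne_of_gt hpos
  have hSiginv : (Sig⁻¹).PosDef := hSig.inv
  have hSigT : (Sig⁻¹)ᵀ = Sig⁻¹ := by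
    have := hSiginv.isHermitian
    simpa [Matrix.IsHermitian, conjTranspose_eq_transpose_of_trivial] using this
  -- Sinv * U = U * Sig⁻¹
  have hSinvU : Sinv * U = U * Sig⁻¹ := by
    rw [hSinv]
    simp [Matrix.add_mul, Matrix.smul_mul, Matrix.mul_assoc, hUU, hVU]
  -- Sinv symmetric
  have hSinvT : Sinvᵀ = Sinv := by
    rw [hSinv]
    simp [transpose_add, transpose_smul, transpose_mul, hSigT, Matrix.mul_assoc]
  -- the weighted sum of Uᵀ (y i - U μhat) vanishes
  have hsum : ∑ i, t i • (Uᵀ *ᵥ (y i - U *ᵥ μhat)) = 0 := by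
    have h1 : ∀ i, Uᵀ *ᵥ (y i - U *ᵥ μhat) = Uᵀ *ᵥ y i - μhat := by
      intro i
      rw [mulVec_sub, mulVec_mulVec, hUU, one_mulVec]
    have h2 : ∑ i, t i • Uᵀ *ᵥ y i = nk • μhat := by
      rw [hμhat, smul_smul, mul_inv_cancel₀ hne, one_smul]
    simp only [h1, smul_sub]
    rw [Finset.sum_sub_distrib, h2, ← Finset.sum_smul, ← hnk, sub_self]
  intro μ
  obtain ⟨δ, hδdef⟩ : ∃ δ : Fin d → ℝ, δ = μ - μhat := ⟨_, rfl⟩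
  -- key expansion
  have key : (∑ i, t i * ((y i - U.mulVec μ) ⬝ᵥ Sinv.mulVec (y i - U.mulVec μ)))
      = (∑ i, t i * ((y i - U.mulVec μhat) ⬝ᵥ Sinv.mulVec (y i - U.mulVec μhat)))
        + nk * (δ ⬝ᵥ Sig⁻¹ *ᵥ δ) := by
    have hUμ : ∀ i, y i - U *ᵥ μ = (y i - U *ᵥ μhat) - U *ᵥ δ := by
      intro i
      rw [hδdef, mulVec_sub]
      abel
    have hSb : Sinv *ᵥ (U *ᵥ δ) = U *ᵥ (Sig⁻¹ *ᵥ δ) := by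
      rw [mulVec_mulVec, hSinvU, ← mulVec_mulVec]
    have cross : ∀ a : Fin p → ℝ, a ⬝ᵥ Sinv *ᵥ (U *ᵥ δ) = (Uᵀ *ᵥ a) ⬝ᵥ (Sig⁻¹ *ᵥ δ) := by
      intro a
      rw [hSb, Matrix.dotProduct_mulVec a U, ← Matrix.mulVec_transpose]
    have hcomm : ∀ u w : Fin p → ℝ, u ⬝ᵥ Sinv *ᵥ w = w ⬝ᵥ Sinv *ᵥ u := by
      intro u w
      rw [Matrix.dotProduct_mulVec u Sinv, ← Matrix.mulVec_transpose, hSinvT,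
        dotProduct_comm]
    have cross' : ∀ a : Fin p → ℝ, (U *ᵥ δ) ⬝ᵥ Sinv *ᵥ a = (Uᵀ *ᵥ a) ⬝ᵥ (Sig⁻¹ *ᵥ δ) := by
      intro a
      rw [hcomm, cross]
    have quad : (U *ᵥ δ) ⬝ᵥ Sinv *ᵥ (U *ᵥ δ) = δ ⬝ᵥ Sig⁻¹ *ᵥ δ := by
      rw [cross, mulVec_mulVec, hUU, one_mulVec]
    have expand : ∀ i, t i * ((y i - U.mulVec μ) ⬝ᵥ Sinv.mulVec (y i - U.mulVec μ))
        = t i * ((y i - U.mulVec μhat) ⬝ᵥ Sinv.mulVec (y i - U.mulVec μhat))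
          - 2 * ((t i • (Uᵀ *ᵥ (y i - U *ᵥ μhat))) ⬝ᵥ (Sig⁻¹ *ᵥ δ))
          + t i * (δ ⬝ᵥ Sig⁻¹ *ᵥ δ) := by
      intro i
      rw [hUμ i, mulVec_sub, sub_dotProduct, dotProduct_sub, dotProduct_sub,
        cross (y i - U *ᵥ μhat), cross' (y i - U *ᵥ μhat), quad, smul_dotProduct]
      simp only [smul_eq_mul]
      ring
    rw [Finset.sum_congr rfl fun i _ => expand i]
    rw [Finset.sum_add_distrib, Finset.sum_sub_distrib, ← Finset.mul_sum,
      sum_dot, hsum, zero_dotProduct, mul_zero, sub_zero, ← Finset.sum_mul, ← hnk]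
  -- positivity
  have hq0 : 0 ≤ δ ⬝ᵥ Sig⁻¹ *ᵥ δ := by
    rcases eq_or_ne δ 0 with h | h
    · simp [h]
    · have := hSiginv.dotProduct_mulVec_pos h
      simpa using this.le
  constructor
  · rw [key]
    nlinarith [mul_nonneg hpos.le hq0]
  · intro heq
    rw [key] at heq
    have h0 : nk * (δ ⬝ᵥ Sig⁻¹ *ᵥ δ) = 0 := by linarith
    have hq : δ ⬝ᵥ Sig⁻¹ *ᵥ δ = 0 := by
      rcases mul_eq_zero.mp h0 with h | h
      · exact absurd h hne
      · exact h
    by_contra hμ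
    have hδ : δ ≠ 0 := by
      intro h
      rw [h] at hδdef
      exact hμ (sub_eq_zero.mp hδdef.symm)
    have := hSiginv.dotProduct_mulVec_pos hδ
    simp only [star_trivial] at this
    linarith
end
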